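/- Let λ₁,…,λ_n, λ̄₁,…,λ̄_n be real numbers with n ≥ 4 such that for all distinct i, j, k: (λ_i − λ_k)[λ_j + (λ_i + λ_k)/(n−2)] = (λ̄_i − λ̄_k)[λ̄_j + (λ̄_i + λ̄_k)/(n−2)]. Suppose λ₁ ≠ λ₂. If there exist indices i, k outside {1,2,3} with λ_i ≠ λ_k, then the three points (λ₁, λ̄₁), (λ₂, λ̄₂), (λ₃, λ̄₃) in ℝ² are collinear. -/
import Mathlib


/-- The collinearity step in the rigidity proof: if
`(λ_i − λ_k)[λ_j + (λ_i + λ_k)/(n−2)] = (λ̄_i − λ̄_k)[λ̄_j + (λ̄_i + λ̄_k)/(n−2)]`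
holds for all distinct `i, j, k`, `λ₁ ≠ λ₂`, and there are indices `i, k`
outside `{1,2,3}` (0-indexed: with `i, k ≥ 3`) with `λ_i ≠ λ_k`, then the
three points `(λ₁, λ̄₁), (λ₂, λ̄₂), (λ₃, λ̄₃)` in `ℝ²` are collinear. -/
theorem stmt5 (n : ℕ) (hn : 4 ≤ n) (l lb : Fin n → ℝ)
    (heq : ∀ i j k : Fin n, i ≠ j → j ≠ k → i ≠ k →
      (l i - l k) * (l j + (l i + l k) / ((n : ℝ) - 2))
        = (lb i - lb k) * (lb j + (lb i + lb k) / ((n : ℝ) - 2)))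
    (h12 : l ⟨0, by omega⟩ ≠ l ⟨1, by omega⟩)
    (hex : ∃ i k : Fin n, 3 ≤ (i : ℕ) ∧ 3 ≤ (k : ℕ) ∧ l i ≠ l k) :
    Collinear ℝ
      ({(l ⟨0, by omega⟩, lb ⟨0, by omega⟩),
        (l ⟨1, by omega⟩, lb ⟨1, by omega⟩),
        (l ⟨2, by omega⟩, lb ⟨2, by omega⟩)} : Set (ℝ × ℝ)) := by
  obtain ⟨i, k, hi3, hk3, hik⟩ := hex
  have hikne : i ≠ k := fun h => hik (by rw [h])
  set a : ℝ := l i - l k with ha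
  set b : ℝ := lb i - lb k with hb
  have hA : a ≠ 0 := sub_ne_zero.mpr hik
  set d : ℝ := b * (lb i + lb k) / ((n : ℝ) - 2) - a * (l i + l k) / ((n : ℝ) - 2) with hd
  -- each of the three points satisfies a*x - b*y = d
  have key : ∀ j : Fin n, (j : ℕ) < 3 → a * l j - b * lb j = d := by
    intro j hj
    have hij : i ≠ j := fun h => by rw [h] at hi3; omega
    have hjk : j ≠ k := fun h => by rw [h] at hj; omega
    have h := heq i j k hij hjk hikne
    linear_combination h
  rw [collinear_iff_exists_forall_eq_smul_vadd]
  refine ⟨(d / a, 0), (b / a, 1), ?_⟩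
  intro p hp
  simp only [Set.mem_insert_iff, Set.mem_singleton_iff] at hp
  rcases hp with rfl | rfl | rfl
  · exact ⟨lb ⟨0, by omega⟩, by
      have := key ⟨0, by omega⟩ (by norm_num)
      simp [Prod.ext_iff]
      field_simp
      linarith⟩
  · exact ⟨lb ⟨1, by omega⟩, by
      have := key ⟨1, by omega⟩ (by norm_num)
      simp [Prod.ext_iff]
      field_simp
      linarith⟩
  · exact ⟨lb ⟨2, by omega⟩, by
      have := key ⟨2, by omega⟩ (by norm_num)
      simp [Prod.ext_iff]
      field_simp
      linarith⟩
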